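/- For the dihedral group I_2(N) with constant multiplicity m, the polynomials q_j (j = 1,…,N−1) defined as q_j = Σ_{t=0}^{m} a_{jt} z̄^{tN} z^{(m−t)N+j}, with coefficients (a_{j0},…,a_{jm}) a nonzero solution of the system Σ_{t=0}^{m} ((m−2t)N + j)^{2s−1} a_{jt} = 0 for s = 1,…,m, are m-quasiinvariants of I_2(N). -/

import Mathlib

open Finset

private lemma hexp_aux (z : ℂ) (φ : ℝ) :
    HasDerivAt (fun φ : ℝ => Complex.exp (z * φ)) (z * Complex.exp (z * φ)) φ := by
  have h1 : HasDerivAt (fun φ : ℝ => (φ : ℂ)) 1 φ := by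
    simpa using (hasDerivAt_id φ).ofReal_comp
  have h2 := (h1.const_mul z).cexp
  simpa [mul_comm] using h2

private lemma iter_exp_sum {ι : Type*} [Fintype ι] (b z : ι → ℂ) (n : ℕ) :
    iteratedDeriv n (fun φ : ℝ => ∑ t, b t * Complex.exp (z t * (φ:ℂ))) =
      fun φ : ℝ => ∑ t, b t * z t ^ n * Complex.exp (z t * (φ:ℂ)) := by
  induction n with
  | zero => simp
  | succ n ih =>
    rw [iteratedDeriv_succ, ih]
    funext φ
    have h : HasDerivAt (fun φ : ℝ => ∑ t, b t * z t ^ n * Complex.exp (z t * (φ:ℂ)))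
        (∑ t, b t * z t ^ (n + 1) * Complex.exp (z t * (φ:ℂ))) φ := by
      have := HasDerivAt.fun_sum
        (fun t (_ : t ∈ Finset.univ) => (hexp_aux (z t) φ).const_mul (b t * z t ^ n))
      convert this using 1
      case e'_4 => rfl
      apply Finset.sum_congr rfl
      intro t _
      ring
    rw [h.deriv]

/-- The polynomials `q_j = Σ_t a_t z̄^{tN} z^{(m−t)N+j}` with coefficients solving
`Σ_t ((m−2t)N+j)^{2s−1} a_t = 0`, `s = 1,…,m`, are `m`-quasiinvariants of `I₂(N)`:
all odd angular derivatives up to order `2m−1` vanish on the mirror lines `φ = πk/N`. -/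
theorem stmt11 (N m : ℕ) (hN : 2 ≤ N) (j : ℕ) (hj1 : 1 ≤ j) (hj2 : j ≤ N - 1)
    (a : Fin (m+1) → ℂ) (ha : a ≠ 0)
    (hsys : ∀ s : ℕ, 1 ≤ s → s ≤ m →
      ∑ t : Fin (m+1),
        (((((m:ℤ) - 2 * (t:ℕ)) * N + j : ℤ)) : ℂ)^(2*s-1) * a t = 0) :
    ∀ (r : ℝ) (k : ℕ), k < N → ∀ s : ℕ, 1 ≤ s → s ≤ m →
      iteratedDeriv (2*s-1)
        (fun φ : ℝ => ∑ t : Fin (m+1),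
          a t * ((starRingEnd ℂ) ((r:ℂ) * Complex.exp ((φ:ℂ) * Complex.I))) ^ ((t:ℕ) * N)
            * ((r:ℂ) * Complex.exp ((φ:ℂ) * Complex.I)) ^ ((m - (t:ℕ)) * N + j))
        (Real.pi * k / N) = 0 := by
  intro r k hk s hs1 hs2
  set c : Fin (m+1) → ℂ := fun t => (((((m:ℤ) - 2 * (t:ℕ)) * N + j : ℤ)) : ℂ) with hc
  set R : ℂ := (r : ℂ) ^ (m * N + j) with hR
  have hfun : (fun φ : ℝ => ∑ t : Fin (m+1),
      a t * ((starRingEnd ℂ) ((r:ℂ) * Complex.exp ((φ:ℂ) * Complex.I))) ^ ((t:ℕ) * N)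
        * ((r:ℂ) * Complex.exp ((φ:ℂ) * Complex.I)) ^ ((m - (t:ℕ)) * N + j)) =
      fun φ : ℝ => ∑ t : Fin (m+1), (a t * R) * Complex.exp ((c t * Complex.I) * φ) := by
    funext φ
    apply Finset.sum_congr rfl
    intro t _
    have ht : (t : ℕ) ≤ m := Nat.lt_succ_iff.mp t.isLt
    have hconj : (starRingEnd ℂ) ((r:ℂ) * Complex.exp ((φ:ℂ) * Complex.I)) =
        (r : ℂ) * Complex.exp (-((φ:ℂ) * Complex.I)) := by
      rw [map_mul, Complex.conj_ofReal, ← Complex.exp_conj, map_mul, Complex.conj_ofReal,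
        Complex.conj_I, mul_neg]
    rw [hconj, mul_pow, mul_pow, ← Complex.exp_nat_mul, ← Complex.exp_nat_mul]
    have hr : (r : ℂ) ^ ((t:ℕ) * N) * (r : ℂ) ^ ((m - (t:ℕ)) * N + j) = R := by
      rw [hR, ← pow_add]
      congr 1
      have h1 : (t:ℕ) * N ≤ m * N := Nat.mul_le_mul_right N ht
      rw [Nat.sub_mul]
      omega
    have hce : ((t:ℕ) * N : ℕ) * -((φ:ℂ) * Complex.I) +
        (((m - (t:ℕ)) * N + j : ℕ) : ℂ) * ((φ:ℂ) * Complex.I) = (c t * Complex.I) * φ := by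
      rw [hc]
      push_cast [Nat.cast_sub ht]
      ring
    calc a t * ((r:ℂ) ^ ((t:ℕ) * N) * Complex.exp (((t:ℕ) * N : ℕ) * -((φ:ℂ) * Complex.I)))
          * ((r:ℂ) ^ ((m - (t:ℕ)) * N + j) * Complex.exp ((((m - (t:ℕ)) * N + j : ℕ)) * ((φ:ℂ) * Complex.I)))
        = (a t * ((r:ℂ) ^ ((t:ℕ) * N) * (r:ℂ) ^ ((m - (t:ℕ)) * N + j))) *
            (Complex.exp (((t:ℕ) * N : ℕ) * -((φ:ℂ) * Complex.I)) *
             Complex.exp ((((m - (t:ℕ)) * N + j : ℕ)) * ((φ:ℂ) * Complex.I))) := by ring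
      _ = (a t * R) * Complex.exp ((c t * Complex.I) * φ) := by
          rw [hr, ← Complex.exp_add, hce]
  rw [hfun, iter_exp_sum]
  have hN0 : (N : ℂ) ≠ 0 := Nat.cast_ne_zero.mpr (by omega)
  set φ₀ : ℝ := Real.pi * k / N with hφ₀
  have hexpval : ∀ t : Fin (m+1), Complex.exp ((c t * Complex.I) * (φ₀ : ℂ)) =
      Complex.exp ((((m * N + j : ℕ) : ℂ) * Complex.I) * (φ₀ : ℂ)) := by
    intro t
    have key : (c t * Complex.I) * (φ₀ : ℂ) =
        (((m * N + j : ℕ) : ℂ) * Complex.I) * (φ₀ : ℂ) +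
          ((-((t:ℕ) * k : ℤ) : ℤ) : ℂ) * (2 * (Real.pi : ℂ) * Complex.I) := by
      rw [hc, hφ₀]
      push_cast
      field_simp
      ring
    rw [key, Complex.exp_add, Complex.exp_int_mul_two_pi_mul_I, mul_one]
  set E : ℂ := Complex.exp ((((m * N + j : ℕ) : ℂ) * Complex.I) * (φ₀ : ℂ)) with hE
  calc ∑ t : Fin (m+1), (a t * R) * (c t * Complex.I) ^ (2*s-1) *
          Complex.exp ((c t * Complex.I) * (φ₀ : ℂ))
      = ∑ t : Fin (m+1), (R * Complex.I ^ (2*s-1) * E) * ((c t) ^ (2*s-1) * a t) := by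
        apply Finset.sum_congr rfl
        intro t _
        rw [hexpval t]
        ring
    _ = (R * Complex.I ^ (2*s-1) * E) * ∑ t : Fin (m+1), (c t) ^ (2*s-1) * a t := by
        rw [Finset.mul_sum]
    _ = 0 := by rw [hsys s hs1 hs2, mul_zero]
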